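/- arXiv:1411.7245 — 5 statements merged into one kernel-verified Lean document; each statement's English description precedes it below -/
import Mathlib

section
/- For every nonnegative real matrix X, rank(X) = 2 if and only if rank₊(X) = 2. -/
open Matrix Module

/-- The nonnegative rank of a real matrix: the smallest `r` such that `X = W * H`
with `W` an (rows × r) matrix and `H` an (r × cols) matrix, both entrywise nonnegative. -/
noncomputable def nnRank {α β : Type*} (X : Matrix α β ℝ) : ℕ :=
  sInf {r : ℕ | ∃ (W : Matrix α (Fin r) ℝ) (H : Matrix (Fin r) β ℝ),
    (∀ i k, 0 ≤ W i k) ∧ (∀ k j, 0 ≤ H k j) ∧ X = W * H}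

private lemma interp_aux (t t1 t2 U W : ℝ) (h : t2 - t1 ≠ 0) :
    (1-t)*U + t*W = (t2-t)/(t2-t1) * ((1-t1)*U + t1*W)
      + (t-t1)/(t2-t1) * ((1-t2)*U + t2*W) := by
  field_simp
  ring

private lemma normcol_aux (A Aa Ab Sa Sb sj aj bj : ℝ) (hSa : Sa ≠ 0) (hSb : Sb ≠ 0)
    (hsj : sj ≠ 0) (hs : sj = aj*Sa + bj*Sb) (hA : A = aj*Aa + bj*Ab) :
    A / sj = (1 - bj*Sb/sj) * (Aa/Sa) + (bj*Sb/sj) * (Ab/Sb) := by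
  subst hA
  subst hs
  field_simp
  ring

private lemma rank_le_nnRank_aux {m n : ℕ} (X : Matrix (Fin m) (Fin n) ℝ)
    (hX : ∀ i j, 0 ≤ X i j) : X.rank ≤ nnRank X := by
  classical
  have hne : {r : ℕ | ∃ (W : Matrix (Fin m) (Fin r) ℝ) (H : Matrix (Fin r) (Fin n) ℝ),
      (∀ i k, 0 ≤ W i k) ∧ (∀ k j, 0 ≤ H k j) ∧ X = W * H}.Nonempty := by
    refine ⟨n, X, 1, hX, ?_, (Matrix.mul_one X).symm⟩
    intro k j
    by_cases h : k = j <;> simp [Matrix.one_apply, h]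
  obtain ⟨W, H, -, -, hEq⟩ := Nat.sInf_mem hne
  calc X.rank = (W * H).rank := by rw [← hEq]
    _ ≤ W.rank := Matrix.rank_mul_le_left W H
    _ ≤ nnRank X := W.rank_le_width

private lemma nnRank_le_one_aux {m n : ℕ} (X : Matrix (Fin m) (Fin n) ℝ)
    (hX : ∀ i j, 0 ≤ X i j) (h : X.rank ≤ 1) : nnRank X ≤ 1 := by
  classical
  by_cases hz : X = 0
  · subst hz
    have : (0 : ℕ) ∈ {r : ℕ | ∃ (W : Matrix (Fin m) (Fin r) ℝ) (H : Matrix (Fin r) (Fin n) ℝ),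
        (∀ i k, 0 ≤ W i k) ∧ (∀ k j, 0 ≤ H k j) ∧ (0 : Matrix (Fin m) (Fin n) ℝ) = W * H} := by
      refine ⟨fun _ k => k.elim0, fun k _ => k.elim0, fun _ k => k.elim0, fun k _ => k.elim0, ?_⟩
      ext i j
      erw [Matrix.mul_apply]
      simp [Matrix.mul_apply]
    exact le_trans (Nat.sInf_le this) (by norm_num)
  · obtain ⟨j0, hj0⟩ : ∃ j0, Xᵀ j0 ≠ 0 := by
      by_contra hc
      push_neg at hc
      apply hz
      ext i j
      have := congrFun (hc j) i
      simpa using this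
    set s : Fin n → ℝ := fun j => ∑ i, X i j with hs
    have hs0 : ∀ j, 0 ≤ s j := fun j => Finset.sum_nonneg (fun i _ => hX i j)
    have hzero : ∀ j, s j = 0 → ∀ i, X i j = 0 := by
      intro j hj i
      exact (Finset.sum_eq_zero_iff_of_nonneg (fun i _ => hX i j)).mp hj i (Finset.mem_univ i)
    have hsj0 : 0 < s j0 := by
      rcases lt_or_eq_of_le (hs0 j0) with h' | h'
      · exact h'
      · exact absurd (funext fun i => (hzero j0 h'.symm i)) hj0
    have h2 : finrank ℝ (Submodule.span ℝ (Set.range Xᵀ)) ≤ 1 := by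
      rw [Matrix.rank_eq_finrank_span_cols] at h; exact h
    have hcoleq : Submodule.span ℝ {Xᵀ j0} = Submodule.span ℝ (Set.range Xᵀ) := by
      apply Submodule.eq_of_le_of_finrank_le
      · exact Submodule.span_le.mpr (Set.singleton_subset_iff.mpr (Submodule.subset_span ⟨j0, rfl⟩))
      · rw [finrank_span_singleton hj0]; exact h2
    have hmem : ∀ j, Xᵀ j ∈ Submodule.span ℝ {Xᵀ j0} := by
      intro j
      rw [hcoleq]
      exact Submodule.subset_span ⟨j, rfl⟩
    choose γ hγ using fun j => Submodule.mem_span_singleton.mp (hmem j)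
    have hpt : ∀ j i, X i j = γ j * X i j0 := by
      intro j i
      have := congrFun (hγ j) i
      simpa using this.symm
    have hγsum : ∀ j, s j = γ j * s j0 := by
      intro j
      calc s j = ∑ i, X i j := rfl
        _ = ∑ i, γ j * X i j0 := Finset.sum_congr rfl (fun i _ => hpt j i)
        _ = γ j * ∑ i, X i j0 := by rw [Finset.mul_sum]
        _ = γ j * s j0 := rfl
    have hγnn : ∀ j, 0 ≤ γ j := by
      intro j
      have : γ j = s j / s j0 := by
        rw [eq_div_iff hsj0.ne']
        exact (hγsum j).symm
      rw [this]
      exact div_nonneg (hs0 j) hsj0.le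
    apply Nat.sInf_le
    refine ⟨fun i _ => X i j0, fun _ j => γ j, fun i _ => hX i j0, fun _ j => hγnn j, ?_⟩
    ext i j
    erw [Matrix.mul_apply]
    simp only [Matrix.mul_apply, Fin.sum_univ_one]
    exact (hpt j i).trans (mul_comm _ _)

private lemma nnRank_le_two_aux {m n : ℕ} (X : Matrix (Fin m) (Fin n) ℝ)
    (hX : ∀ i j, 0 ≤ X i j) (h : X.rank = 2) : nnRank X ≤ 2 := by
  classical
  have h2 : finrank ℝ (Submodule.span ℝ (Set.range Xᵀ)) = 2 := by
    rw [Matrix.rank_eq_finrank_span_cols] at h; exact h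
  obtain ⟨a, ha⟩ : ∃ a, Xᵀ a ≠ 0 := by
    by_contra hc
    push_neg at hc
    have hbot : Submodule.span ℝ (Set.range Xᵀ) = ⊥ := by
      rw [Submodule.span_eq_bot]
      rintro x ⟨j, rfl⟩
      exact hc j
    rw [hbot] at h2
    simp at h2
  obtain ⟨b, hb⟩ : ∃ b, Xᵀ b ∉ Submodule.span ℝ {Xᵀ a} := by
    by_contra hc
    push_neg at hc
    have hle : Submodule.span ℝ (Set.range Xᵀ) ≤ Submodule.span ℝ {Xᵀ a} :=
      Submodule.span_le.mpr (by rintro x ⟨j, rfl⟩; exact hc j)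
    have := Submodule.finrank_mono (R := ℝ) hle
    rw [h2, finrank_span_singleton ha] at this
    omega
  have hbne : Xᵀ b ≠ 0 := fun hb0 => hb (hb0 ▸ Submodule.zero_mem _)
  have hli : LinearIndependent ℝ ![Xᵀ a, Xᵀ b] := by
    rw [linearIndependent_fin2]
    constructor
    · simpa using hbne
    · intro c hc
      simp only [Matrix.cons_val_one, Matrix.head_cons, Matrix.cons_val_zero] at hc
      apply hb
      have hc0 : c ≠ 0 := by
        rintro rfl
        simp at hc
        exact ha hc.symm
      exact Submodule.mem_span_singleton.mpr
        ⟨c⁻¹, by rw [← hc, smul_smul, inv_mul_cancel₀ hc0, one_smul]⟩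
  have hrange : Set.range ![Xᵀ a, Xᵀ b] = {Xᵀ a, Xᵀ b} := by
    ext x
    simp only [Set.mem_range, Fin.exists_fin_two, Matrix.cons_val_zero, Matrix.cons_val_one,
      Matrix.head_cons, Set.mem_insert_iff, Set.mem_singleton_iff]
    constructor
    · rintro (rfl | rfl) <;> simp
    · rintro (rfl | rfl) <;> simp
  have hspan2 : finrank ℝ (Submodule.span ℝ ({Xᵀ a, Xᵀ b} : Set (Fin m → ℝ))) = 2 := by
    rw [← hrange, finrank_span_eq_card hli]
    simp
  have hseq : Submodule.span ℝ ({Xᵀ a, Xᵀ b} : Set (Fin m → ℝ))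
      = Submodule.span ℝ (Set.range Xᵀ) := by
    apply Submodule.eq_of_le_of_finrank_le
    · apply Submodule.span_le.mpr
      rintro x hx
      rcases hx with rfl | hx
      · exact Submodule.subset_span ⟨a, rfl⟩
      · rw [Set.mem_singleton_iff] at hx
        subst hx
        exact Submodule.subset_span ⟨b, rfl⟩
    · rw [h2, hspan2]
  have hmem : ∀ j, Xᵀ j ∈ Submodule.span ℝ ({Xᵀ a, Xᵀ b} : Set (Fin m → ℝ)) := by
    intro j
    rw [hseq]
    exact Submodule.subset_span ⟨j, rfl⟩
  choose α β hαβ using fun j => Submodule.mem_span_pair.mp (hmem j)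
  have hpt : ∀ j i, X i j = α j * X i a + β j * X i b := by
    intro j i
    have := congrFun (hαβ j) i
    simpa using this.symm
  -- β a = 0
  have hβa : β a = 0 := by
    by_contra hβ
    apply hb
    refine Submodule.mem_span_singleton.mpr ⟨(1 - α a)/β a, ?_⟩
    funext i
    simp only [Pi.smul_apply, smul_eq_mul, Matrix.transpose_apply]
    have h1 := hpt a i
    field_simp
    linear_combination h1
  have hβb : β b = 1 := by
    by_contra hβ
    apply hb
    have hne1 : (1 : ℝ) - β b ≠ 0 := sub_ne_zero.mpr (fun hh => hβ hh.symm)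
    refine Submodule.mem_span_singleton.mpr ⟨α b/(1 - β b), ?_⟩
    funext i
    simp only [Pi.smul_apply, smul_eq_mul, Matrix.transpose_apply]
    have h1 := hpt b i
    field_simp
    linear_combination -h1
  set s : Fin n → ℝ := fun j => ∑ i, X i j with hs
  have hs0 : ∀ j, 0 ≤ s j := fun j => Finset.sum_nonneg (fun i _ => hX i j)
  have hzero : ∀ j, s j = 0 → ∀ i, X i j = 0 := by
    intro j hj i
    exact (Finset.sum_eq_zero_iff_of_nonneg (fun i _ => hX i j)).mp hj i (Finset.mem_univ i)
  have hcolpos : ∀ j, Xᵀ j ≠ 0 → s j ≠ 0 := by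
    intro j hj hsj
    exact hj (funext fun i => hzero j hsj i)
  have hsa : s a ≠ 0 := hcolpos a ha
  have hsb : s b ≠ 0 := hcolpos b hbne
  have hsum : ∀ j, s j = α j * s a + β j * s b := by
    intro j
    calc s j = ∑ i, X i j := rfl
      _ = ∑ i, (α j * X i a + β j * X i b) := Finset.sum_congr rfl (fun i _ => hpt j i)
      _ = α j * (∑ i, X i a) + β j * (∑ i, X i b) := by
          rw [Finset.sum_add_distrib, Finset.mul_sum, Finset.mul_sum]
      _ = α j * s a + β j * s b := rfl
  have hta : β a * s b / s a = 0 := by rw [hβa]; ring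
  have htb : β b * s b / s b = 1 := by rw [hβb]; field_simp
  set J : Finset (Fin n) := Finset.univ.filter (fun j => s j ≠ 0) with hJ
  have haJ : a ∈ J := Finset.mem_filter.mpr ⟨Finset.mem_univ _, hsa⟩
  have hbJ : b ∈ J := Finset.mem_filter.mpr ⟨Finset.mem_univ _, hsb⟩
  obtain ⟨a', ha'J, hmin⟩ := Finset.exists_min_image J (fun j => β j * s b / s j) ⟨a, haJ⟩
  obtain ⟨b', hb'J, hmax⟩ := Finset.exists_max_image J (fun j => β j * s b / s j) ⟨b, hbJ⟩
  have hsa' : s a' ≠ 0 := (Finset.mem_filter.mp ha'J).2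
  have hsb' : s b' ≠ 0 := (Finset.mem_filter.mp hb'J).2
  have hd : 0 < β b' * s b / s b' - β a' * s b / s a' := by
    have h1 : β a' * s b / s a' ≤ β a * s b / s a := hmin a haJ
    have h2 : β b * s b / s b ≤ β b' * s b / s b' := hmax b hbJ
    rw [hta] at h1
    rw [htb] at h2
    linarith
  apply Nat.sInf_le
  refine ⟨fun i (k : Fin 2) => if k = 0 then X i a' else X i b',
    fun (k : Fin 2) j => if s j = 0 then 0 else
      if k = 0 then s j * (β b' * s b / s b' - β j * s b / s j)
        / ((β b' * s b / s b' - β a' * s b / s a') * s a')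
      else s j * (β j * s b / s j - β a' * s b / s a')
        / ((β b' * s b / s b' - β a' * s b / s a') * s b'), ?_, ?_, ?_⟩
  · intro i k
    dsimp only
    split_ifs
    · exact hX i a'
    · exact hX i b'
  · intro k j
    dsimp only
    split_ifs with h1 h2
    · exact le_refl _
    · have hjJ : j ∈ J := Finset.mem_filter.mpr ⟨Finset.mem_univ _, h1⟩
      have := hmax j hjJ
      apply div_nonneg
      · apply mul_nonneg (hs0 j)
        linarith
      · exact mul_nonneg hd.le (hs0 a')
    · have hjJ : j ∈ J := Finset.mem_filter.mpr ⟨Finset.mem_univ _, h1⟩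
      have := hmin j hjJ
      apply div_nonneg
      · apply mul_nonneg (hs0 j)
        linarith
      · exact mul_nonneg hd.le (hs0 b')
  · ext i j
    erw [Matrix.mul_apply]
    simp only [Matrix.mul_apply, Fin.sum_univ_two, if_pos rfl,
      if_neg (show (1 : Fin 2) ≠ 0 by decide)]
    by_cases hsj : s j = 0
    · rw [if_pos hsj, if_pos hsj, hzero j hsj i]
      ring
    · rw [if_neg hsj, if_neg hsj]
      have hdne : β b' * s b / s b' - β a' * s b / s a' ≠ 0 := hd.ne'
      have e1 := normcol_aux (X i j) (X i a) (X i b) (s a) (s b) (s j) (α j) (β j)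
        hsa hsb hsj (hsum j) (hpt j i)
      have e2 := normcol_aux (X i a') (X i a) (X i b) (s a) (s b) (s a') (α a') (β a')
        hsa hsb hsa' (hsum a') (hpt a' i)
      have e3 := normcol_aux (X i b') (X i a) (X i b) (s a) (s b) (s b') (α b') (β b')
        hsa hsb hsb' (hsum b') (hpt b' i)
      have e4 := interp_aux (β j * s b / s j) (β a' * s b / s a') (β b' * s b / s b')
        (X i a / s a) (X i b / s b) hdne
      calc X i j = (X i j / s j) * s j := (div_mul_cancel₀ _ hsj).symm
        _ = ((β b' * s b / s b' - β j * s b / s j) / (β b' * s b / s b' - β a' * s b / s a')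
              * (X i a' / s a')
            + (β j * s b / s j - β a' * s b / s a') / (β b' * s b / s b' - β a' * s b / s a')
              * (X i b' / s b')) * s j := by
            rw [e1, e4, ← e2, ← e3]
        _ = (if (0 : Fin 2) = 0 then X i a' else X i b') *
              (s j * (β b' * s b / s b' - β j * s b / s j)
                / ((β b' * s b / s b' - β a' * s b / s a') * s a'))
            + (if (1 : Fin 2) = 0 then X i a' else X i b') *
              (s j * (β j * s b / s j - β a' * s b / s a')
                / ((β b' * s b / s b' - β a' * s b / s a') * s b')) := by
            rw [if_pos rfl, if_neg (show (1 : Fin 2) ≠ 0 by decide)]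
            generalize (β b' * s b / s b' - β j * s b / s j) = P
            generalize hQ : (β b' * s b / s b' - β a' * s b / s a') = Q at hdne ⊢
            generalize (β j * s b / s j - β a' * s b / s a') = R
            field_simp

theorem rank_two_iff_nnRank_two {m n : ℕ} (X : Matrix (Fin m) (Fin n) ℝ)
    (hX : ∀ i j, 0 ≤ X i j) :
    X.rank = 2 ↔ nnRank X = 2 := by
  constructor
  · intro h
    have h1 := rank_le_nnRank_aux X hX
    have h2 := nnRank_le_two_aux X hX h
    omega
  · intro h
    have h1 := rank_le_nnRank_aux X hX
    rw [h] at h1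
    by_contra hne
    have hle1 : X.rank ≤ 1 := by omega
    have := nnRank_le_one_aux X hX hle1
    omega
end

section
/- Let a ∈ ℝⁿ have pairwise distinct entries and let X_a be the n×n linear Euclidean distance matrix X_a(i,j) = (a_i − a_j)². Then rank₊(X_a) ≥ min{ k : C(k, ⌊k/2⌋) ≥ n } ≥ log₂(n), where C(k, ⌊k/2⌋) denotes the binomial coefficient k choose ⌊k/2⌋. -/
open Matrix

private lemma choose_le_two_pow' (m k : ℕ) : m.choose k ≤ 2 ^ m := by
  rcases le_or_gt k m with h | h
  · calc m.choose k ≤ ∑ i ∈ Finset.range (m+1), m.choose i :=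
        Finset.single_le_sum (f := fun i => m.choose i) (fun _ _ => Nat.zero_le _)
          (Finset.mem_range.mpr (Nat.lt_succ_of_le h))
      _ = 2 ^ m := Nat.sum_range_choose m
  · simp [Nat.choose_eq_zero_of_lt h]

theorem nnRank_linear_EDM_lower_bound {n : ℕ} (a : Fin n → ℝ)
    (ha : Function.Injective a) :
    sInf {k : ℕ | n ≤ k.choose (k / 2)} ≤ nnRank (Matrix.of fun i j : Fin n => (a i - a j) ^ 2) ∧
    Real.logb 2 n ≤ ((sInf {k : ℕ | n ≤ k.choose (k / 2)} : ℕ) : ℝ) := by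
  classical
  set X : Matrix (Fin n) (Fin n) ℝ := Matrix.of fun i j : Fin n => (a i - a j) ^ 2 with hX
  -- nonempty set in the nnRank definition
  have hne : {r : ℕ | ∃ (W : Matrix (Fin n) (Fin r) ℝ) (H : Matrix (Fin r) (Fin n) ℝ),
      (∀ i k, 0 ≤ W i k) ∧ (∀ k j, 0 ≤ H k j) ∧ X = W * H}.Nonempty := by
    refine ⟨n, Matrix.of fun i k => (a i - a (Fin.cast rfl k)) ^ 2, 1, fun i k => sq_nonneg _,
      fun k j => ?_, by simp [hX]⟩
    by_cases h : k = j <;> simp [Matrix.one_apply, h]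
  obtain ⟨W, H, hW, hH, hfac⟩ := Nat.sInf_mem hne
  set r := nnRank X with hr
  -- support sets
  set U : Fin n → Finset (Fin r) := fun i => Finset.univ.filter (fun k => W i k ≠ 0) with hU
  set T : Fin n → Finset (Fin r) := fun j => Finset.univ.filter (fun k => H k j ≠ 0) with hT
  have hdisj : ∀ i : Fin n, ∀ k, ¬ (k ∈ U i ∧ k ∈ T i) := by
    intro i k ⟨hk1, hk2⟩
    have h0 : X i i = 0 := by simp [hX]
    rw [hfac, Matrix.mul_apply] at h0
    have := (Finset.sum_eq_zero_iff_of_nonneg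
      (fun k _ => mul_nonneg (hW i k) (hH k i))).mp h0 k (Finset.mem_univ k)
    rcases mul_eq_zero.mp this with h | h
    · exact (Finset.mem_filter.mp hk1).2 h
    · exact (Finset.mem_filter.mp hk2).2 h
  have hmeet : ∀ i j : Fin n, i ≠ j → ∃ k, k ∈ U i ∧ k ∈ T j := by
    intro i j hij
    have hpos : 0 < X i j := by
      have h0 : a i - a j ≠ 0 := sub_ne_zero.mpr fun h => hij (ha h)
      simp only [hX, Matrix.of_apply]
      positivity
    rw [hfac, Matrix.mul_apply] at hpos
    by_contra hcon
    push_neg at hcon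
    have : ∑ k, W i k * H k j = 0 := by
      refine Finset.sum_eq_zero fun k _ => ?_
      by_cases h1 : W i k = 0
      · simp [h1]
      · have h2 : k ∈ U i := Finset.mem_filter.mpr ⟨Finset.mem_univ _, h1⟩
        have h3 : H k j = 0 := by
          by_contra h3
          exact hcon k h2 (Finset.mem_filter.mpr ⟨Finset.mem_univ _, h3⟩)
        simp [h3]
    linarith
  have hUinj : Function.Injective U := by
    intro i j hUij
    by_contra hij
    obtain ⟨k, hk1, hk2⟩ := hmeet i j hij
    rw [hUij] at hk1
    exact hdisj j k ⟨hk1, hk2⟩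
  -- antichain
  set 𝒜 : Finset (Finset (Fin r)) := Finset.univ.image U with h𝒜
  have hanti : IsAntichain (· ⊆ ·) (𝒜 : Set (Finset (Fin r))) := by
    intro s hs t ht hst hsub
    simp only [h𝒜, Finset.coe_image, Set.mem_image] at hs ht
    obtain ⟨i, _, rfl⟩ := hs
    obtain ⟨j, _, rfl⟩ := ht
    have hij : i ≠ j := fun h => hst (by rw [h])
    obtain ⟨k, hk1, hk2⟩ := hmeet i j hij
    exact hdisj j k ⟨hsub hk1, hk2⟩
  have hcard : 𝒜.card = n := by
    rw [h𝒜, Finset.card_image_of_injective _ hUinj, Finset.card_univ, Fintype.card_fin]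
  have hsperner : n ≤ r.choose (r / 2) := by
    have := IsAntichain.sperner hanti
    rwa [hcard, Fintype.card_fin] at this
  have hmem : r ∈ {k : ℕ | n ≤ k.choose (k / 2)} := hsperner
  refine ⟨Nat.sInf_le hmem, ?_⟩
  -- second part
  set m := sInf {k : ℕ | n ≤ k.choose (k / 2)} with hm
  have hmset : n ≤ m.choose (m / 2) := Nat.sInf_mem ⟨r, hmem⟩
  have h2 : n ≤ 2 ^ m := hmset.trans (choose_le_two_pow' m (m / 2))
  rcases Nat.eq_zero_or_pos n with h0 | h0
  · simp [h0, Real.logb]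
  · have : (n : ℝ) ≤ (2 : ℝ) ^ (m : ℝ) := by
      rw [Real.rpow_natCast]
      exact_mod_cast h2
    calc Real.logb 2 n ≤ Real.logb 2 ((2:ℝ) ^ (m : ℝ)) :=
          Real.logb_le_logb_of_le (by norm_num) (by exact_mod_cast h0) this
      _ = m := Real.logb_rpow (by norm_num) (by norm_num)
end

section
/- For every positive integer n, the linear Euclidean distance matrices X_{[n]} and X_{[2n]} defined by X_{[m]}(i,j) = (i − j)² for 1 ≤ i, j ≤ m satisfy rank₊(X_{[2n]}) ≤ rank₊(X_{[n]}) + 2. -/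
open Matrix

/-- The m×m linear Euclidean distance matrix with entries `(i - j)²`. -/
noncomputable def LEDM (m : ℕ) : Matrix (Fin m) (Fin m) ℝ :=
  Matrix.of fun i j => ((i : ℝ) - (j : ℝ)) ^ 2

lemma LEDM_double_key (n r : ℕ) (hn : 0 < n)
    (W : Matrix (Fin n) (Fin r) ℝ) (H : Matrix (Fin r) (Fin n) ℝ)
    (hW : ∀ i k, 0 ≤ W i k) (hH : ∀ k j, 0 ≤ H k j) (hfac : LEDM n = W * H) :
    ∃ (W' : Matrix (Fin (2 * n)) (Fin (r + 2)) ℝ)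
      (H' : Matrix (Fin (r + 2)) (Fin (2 * n)) ℝ),
      (∀ i k, 0 ≤ W' i k) ∧ (∀ k j, 0 ≤ H' k j) ∧ LEDM (2 * n) = W' * H' := by
  classical
  have hlt : ∀ i : Fin (2 * n), (if (i : ℕ) < n then (i : ℕ) else 2 * n - 1 - i) < n := by
    intro i; have := i.isLt; split <;> omega
  set φ : Fin (2 * n) → Fin n := fun i => ⟨if (i : ℕ) < n then (i : ℕ) else 2 * n - 1 - i, hlt i⟩
    with hφ
  set p : Fin (2 * n) → ℝ := fun i => if (i : ℕ) < n then 2 * n - 1 - 2 * (i : ℕ) else 0 with hp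
  set q : Fin (2 * n) → ℝ := fun i => if (i : ℕ) < n then 0 else 2 * (i : ℕ) + 1 - 2 * n with hq
  have hpn : ∀ i, 0 ≤ p i := by
    intro i; simp only [hp]; split
    · rename_i h
      have : ((i : ℕ) : ℝ) + 1 ≤ (n : ℝ) := by exact_mod_cast h
      linarith
    · exact le_refl 0
  have hqn : ∀ i, 0 ≤ q i := by
    intro i; simp only [hq]; split
    · exact le_refl 0
    · rename_i h
      have : (n : ℝ) ≤ ((i : ℕ) : ℝ) := by exact_mod_cast Nat.le_of_not_lt h
      linarith
  have hφcast : ∀ i : Fin (2 * n), (((φ i) : ℕ) : ℝ) =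
      if (i : ℕ) < n then ((i : ℕ) : ℝ) else 2 * n - 1 - ((i : ℕ) : ℝ) := by
    intro i
    simp only [hφ]
    split
    · rfl
    · rename_i h
      have h1 : (i : ℕ) ≤ 2 * n - 1 := by have := i.isLt; omega
      have h2 : (1 : ℕ) ≤ 2 * n := by omega
      push_cast [Nat.cast_sub h1, Nat.cast_sub h2]
      ring
  have key : ∀ i j : Fin (2 * n),
      LEDM (2 * n) i j = LEDM n (φ i) (φ j) + (p i * q j + q i * p j) := by
    intro i j
    show (((i:ℕ):ℝ) - ((j:ℕ):ℝ))^2 = ((((φ i):ℕ):ℝ) - (((φ j):ℕ):ℝ))^2 + (p i * q j + q i * p j)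
    rw [hφcast i, hφcast j]
    by_cases h1 : (i : ℕ) < n <;> by_cases h2 : (j : ℕ) < n <;>
      simp only [hp, hq, h1, h2, if_true, if_false] <;> ring
  refine ⟨fun i k => if h : (k : ℕ) < r then W (φ i) ⟨k, h⟩
            else if (k : ℕ) = r then p i else q i,
          fun k j => if h : (k : ℕ) < r then H ⟨k, h⟩ (φ j)
            else if (k : ℕ) = r then q j else p j, ?_, ?_, ?_⟩
  · intro i k
    dsimp only
    split
    · apply hW
    · split
      · apply hpn
      · apply hqn
  · intro k j
    dsimp only
    split
    · apply hH
    · split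
      · apply hqn
      · apply hpn
  · ext i j
    rw [key i j, hfac]
    simp only [Matrix.mul_apply]
    erw [Matrix.mul_apply]
    rw [Fin.sum_univ_castSucc, Fin.sum_univ_castSucc]
    have hna : ¬ (r + 1 < r) := by omega
    have hne : r + 1 ≠ r := by omega
    simp only [Fin.coe_castSucc, Fin.val_last, Fin.is_lt, dite_true, Fin.eta,
      lt_self_iff_false, dite_false, if_pos rfl, hna, hne, if_false, if_true, dite_eq_ite]
    ring

theorem nnRank_LEDM_double_le (n : ℕ) (hn : 0 < n) :
    nnRank (LEDM (2 * n)) ≤ nnRank (LEDM n) + 2 := by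
  classical
  have hne : nnRank (LEDM n) ∈ {r : ℕ | ∃ (W : Matrix (Fin n) (Fin r) ℝ)
      (H : Matrix (Fin r) (Fin n) ℝ),
      (∀ i k, 0 ≤ W i k) ∧ (∀ k j, 0 ≤ H k j) ∧ LEDM n = W * H} := by
    apply Nat.sInf_mem
    refine ⟨n, LEDM n, 1, ?_, ?_, (Matrix.mul_one _).symm⟩
    · intro i k; exact sq_nonneg _
    · intro k j; simp [Matrix.one_apply]; positivity
  obtain ⟨W, H, hW, hH, hfac⟩ := hne
  obtain ⟨W', H', hW', hH', hfac'⟩ := LEDM_double_key n (nnRank (LEDM n)) hn W H hW hH hfac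
  exact Nat.sInf_le ⟨W', H', hW', hH', hfac'⟩
end

section
/- For every integer k ≥ 1 and n = 2^k, the linear Euclidean distance matrix X_{[n]} defined by X_{[n]}(i,j) = (i − j)² for 1 ≤ i, j ≤ n satisfies rank₊(X_{[n]}) ≤ 2 log₂(n) = 2k. -/
open Matrix

/-- Iterated folding of `{0,…,2^k-1}`: at step `l → l+1` we fold the range
`[0, 2^(k-l)-1]` onto `[0, 2^(k-l-1)-1]` by `a ↦ min a (s - a)` with `s = 2^(k-l)-1`. -/
def ledmFold (k : ℕ) : ℕ → ℕ → ℕ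
  | 0, a => a
  | l+1, a => min (ledmFold k l a) (2 ^ (k - l) - 1 - ledmFold k l a)

lemma ledmFold_le (k a : ℕ) (ha : a ≤ 2 ^ k - 1) :
    ∀ l, l ≤ k → ledmFold k l a ≤ 2 ^ (k - l) - 1 := by
  intro l
  induction l with
  | zero => intro _; simpa [ledmFold] using ha
  | succ l ih =>
    intro hlk
    have h1 : l ≤ k := Nat.le_of_succ_le hlk
    have hm := ih h1
    have hp : 0 < 2 ^ (k - (l + 1)) := Nat.pow_pos (by norm_num)
    have h2 : 2 ^ (k - l) = 2 * 2 ^ (k - (l + 1)) := by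
      rw [← pow_succ']
      congr 1
      omega
    simp only [ledmFold]
    omega

/-- The key folding identity, valid for all reals. -/
lemma ledm_step (s x y : ℝ) :
    (x - y) ^ 2 = (min x (s - x) - min y (s - y)) ^ 2
      + (2 * max (s / 2 - x) 0) * (2 * max (y - s / 2) 0)
      + (2 * max (x - s / 2) 0) * (2 * max (s / 2 - y) 0) := by
  rcases le_total x (s / 2) with hx | hx <;> rcases le_total y (s / 2) with hy | hy
  · rw [min_eq_left (show x ≤ s - x by linarith),
      min_eq_left (show y ≤ s - y by linarith),
      max_eq_right (show y - s / 2 ≤ 0 by linarith),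
      max_eq_right (show x - s / 2 ≤ 0 by linarith)]
    ring
  · rw [min_eq_left (show x ≤ s - x by linarith),
      min_eq_right (show s - y ≤ y by linarith),
      max_eq_left (show (0:ℝ) ≤ s / 2 - x by linarith),
      max_eq_left (show (0:ℝ) ≤ y - s / 2 by linarith),
      max_eq_right (show x - s / 2 ≤ 0 by linarith)]
    ring
  · rw [min_eq_right (show s - x ≤ x by linarith),
      min_eq_left (show y ≤ s - y by linarith),
      max_eq_right (show s / 2 - x ≤ 0 by linarith),
      max_eq_left (show (0:ℝ) ≤ x - s / 2 by linarith),
      max_eq_left (show (0:ℝ) ≤ s / 2 - y by linarith)]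
    ring
  · rw [min_eq_right (show s - x ≤ x by linarith),
      min_eq_right (show s - y ≤ y by linarith),
      max_eq_right (show s / 2 - x ≤ 0 by linarith),
      max_eq_right (show s / 2 - y ≤ 0 by linarith)]
    ring

/-- First family of nonnegative factors. -/
noncomputable def ledmA (k l a : ℕ) : ℝ :=
  2 * max (((2 : ℝ) ^ (k - l) - 1) / 2 - (ledmFold k l a : ℝ)) 0

/-- Second family of nonnegative factors. -/
noncomputable def ledmC (k l a : ℕ) : ℝ :=
  2 * max ((ledmFold k l a : ℝ) - ((2 : ℝ) ^ (k - l) - 1) / 2) 0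

lemma ledmA_nonneg (k l a : ℕ) : 0 ≤ ledmA k l a :=
  mul_nonneg (by norm_num) (le_max_right _ 0)

lemma ledmC_nonneg (k l a : ℕ) : 0 ≤ ledmC k l a :=
  mul_nonneg (by norm_num) (le_max_right _ 0)

lemma ledmFold_cast (k a : ℕ) (ha : a ≤ 2 ^ k - 1) (l : ℕ) (hl : l < k) :
    (ledmFold k (l + 1) a : ℝ)
      = min (ledmFold k l a : ℝ) (((2 : ℝ) ^ (k - l) - 1) - (ledmFold k l a : ℝ)) := by
  have hb : ledmFold k l a ≤ 2 ^ (k - l) - 1 := ledmFold_le k a ha l (le_of_lt hl)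
  have h1 : (1 : ℕ) ≤ 2 ^ (k - l) := Nat.one_le_two_pow
  show ((min (ledmFold k l a) (2 ^ (k - l) - 1 - ledmFold k l a) : ℕ) : ℝ) = _
  rw [Nat.cast_min, Nat.cast_sub hb, Nat.cast_sub h1]
  push_cast
  ring_nf

lemma ledm_telescope (k i j : ℕ) (hi : i ≤ 2 ^ k - 1) (hj : j ≤ 2 ^ k - 1) :
    ∀ m, m ≤ k →
      ((i : ℝ) - (j : ℝ)) ^ 2
        = ((ledmFold k m i : ℝ) - (ledmFold k m j : ℝ)) ^ 2
          + ∑ l ∈ Finset.range m, (ledmA k l i * ledmC k l j + ledmC k l i * ledmA k l j) := by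
  intro m
  induction m with
  | zero => simp [ledmFold]
  | succ m ih =>
    intro hmk
    have hm : m < k := hmk
    have key : ((ledmFold k m i : ℝ) - (ledmFold k m j : ℝ)) ^ 2
        = ((ledmFold k (m + 1) i : ℝ) - (ledmFold k (m + 1) j : ℝ)) ^ 2
          + (ledmA k m i * ledmC k m j + ledmC k m i * ledmA k m j) := by
      rw [ledmFold_cast k i hi m hm, ledmFold_cast k j hj m hm]
      have := ledm_step ((2 : ℝ) ^ (k - m) - 1) (ledmFold k m i : ℝ) (ledmFold k m j : ℝ)
      simp only [ledmA, ledmC]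
      linarith [this]
    rw [Finset.sum_range_succ, ih (le_of_lt hm)]
    linarith [key]

lemma sum_range_two_mul (f : ℕ → ℝ) (m : ℕ) :
    ∑ c ∈ Finset.range (2 * m), f c = ∑ l ∈ Finset.range m, (f (2 * l) + f (2 * l + 1)) := by
  induction m with
  | zero => simp
  | succ m ih =>
    have h : 2 * (m + 1) = (2 * m + 1) + 1 := by ring
    rw [h, Finset.sum_range_succ, Finset.sum_range_succ, ih, Finset.sum_range_succ]
    ring

theorem nnRank_LEDM_pow_two_le (k : ℕ) (hk : 1 ≤ k) :
    nnRank (LEDM (2 ^ k)) ≤ 2 * k := by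
  apply Nat.sInf_le
  refine ⟨(fun i c => if (c : ℕ) % 2 = 0 then ledmA k ((c : ℕ) / 2) (i : ℕ)
      else ledmC k ((c : ℕ) / 2) (i : ℕ)),
    (fun c j => if (c : ℕ) % 2 = 0 then ledmC k ((c : ℕ) / 2) (j : ℕ)
      else ledmA k ((c : ℕ) / 2) (j : ℕ)), ?_, ?_, ?_⟩
  · intro i c
    dsimp only
    split
    · exact ledmA_nonneg _ _ _
    · exact ledmC_nonneg _ _ _
  · intro c j
    dsimp only
    split
    · exact ledmC_nonneg _ _ _
    · exact ledmA_nonneg _ _ _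
  · ext i j
    rw [LEDM, Matrix.of_apply]; erw [Matrix.mul_apply]
    have hsum :
        (∑ c : Fin (2 * k),
          (if (c : ℕ) % 2 = 0 then ledmA k ((c : ℕ) / 2) (i : ℕ)
              else ledmC k ((c : ℕ) / 2) (i : ℕ)) *
          (if (c : ℕ) % 2 = 0 then ledmC k ((c : ℕ) / 2) (j : ℕ)
              else ledmA k ((c : ℕ) / 2) (j : ℕ)))
        = ∑ c ∈ Finset.range (2 * k),
          ((if c % 2 = 0 then ledmA k (c / 2) (i : ℕ) else ledmC k (c / 2) (i : ℕ)) *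
           (if c % 2 = 0 then ledmC k (c / 2) (j : ℕ) else ledmA k (c / 2) (j : ℕ))) :=
      Fin.sum_univ_eq_sum_range
        (fun c => (if c % 2 = 0 then ledmA k (c / 2) (i : ℕ) else ledmC k (c / 2) (i : ℕ)) *
          (if c % 2 = 0 then ledmC k (c / 2) (j : ℕ) else ledmA k (c / 2) (j : ℕ))) (2 * k)
    rw [hsum, sum_range_two_mul]
    have hi : (i : ℕ) ≤ 2 ^ k - 1 := by have := i.isLt; omega
    have hj : (j : ℕ) ≤ 2 ^ k - 1 := by have := j.isLt; omega
    have htel := ledm_telescope k (i : ℕ) (j : ℕ) hi hj k le_rfl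
    have hzero : ledmFold k k (i : ℕ) = 0 := by
      have := ledmFold_le k (i : ℕ) hi k le_rfl
      simpa using this
    have hzero' : ledmFold k k (j : ℕ) = 0 := by
      have := ledmFold_le k (j : ℕ) hj k le_rfl
      simpa using this
    rw [hzero, hzero'] at htel
    norm_num at htel
    rw [htel]
    apply Finset.sum_congr rfl
    intro l _
    have h0 : (2 * l) % 2 = 0 := by omega
    have h1 : (2 * l) / 2 = l := by omega
    have h2 : (2 * l + 1) % 2 = 1 := by omega
    have h3 : (2 * l + 1) / 2 = l := by omega
    simp [h0, h1, h2, h3]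
end

section
/- Every nonnegative real m×n matrix X admits an optimal rank-one approximation in Frobenius norm that is itself nonnegative: there exist vectors w ∈ ℝ^m and h ∈ ℝ^n with all entries ≥ 0 such that ‖X − w hᵀ‖_F ≤ ‖X − Y‖_F for every real m×n matrix Y with rank(Y) ≤ 1. -/
open Matrix

lemma rank_le_one_exists_factor {m n : ℕ} (Y : Matrix (Fin m) (Fin n) ℝ)
    (hY : Y.rank ≤ 1) : ∃ (u : Fin m → ℝ) (v : Fin n → ℝ), ∀ i j, Y i j = u i * v j := by
  rw [Matrix.rank] at hY
  obtain ⟨v₀, hv₀⟩ := finrank_le_one_iff.mp hY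
  have hcol : ∀ j, ∃ c : ℝ, ∀ i, c * (v₀ : Fin m → ℝ) i = Y i j := by
    intro j
    obtain ⟨c, hc⟩ := hv₀ ⟨Y *ᵥ Pi.single j 1,
      LinearMap.mem_range.mpr ⟨Pi.single j 1, rfl⟩⟩
    refine ⟨c, fun i => ?_⟩
    have hval : (↑(c • v₀) : Fin m → ℝ) = Y *ᵥ Pi.single j 1 := congrArg Subtype.val hc
    have := congrFun hval i
    simpa using this
  choose v hv using hcol
  exact ⟨(v₀ : Fin m → ℝ), v, fun i j => by rw [← hv j i]; ring⟩

theorem exists_nonneg_best_rank_one_approximation {m n : ℕ}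
    (X : Matrix (Fin m) (Fin n) ℝ) (hX : ∀ i j, 0 ≤ X i j) :
    ∃ (w : Fin m → ℝ) (h : Fin n → ℝ),
      (∀ i, 0 ≤ w i) ∧ (∀ j, 0 ≤ h j) ∧
      ∀ Y : Matrix (Fin m) (Fin n) ℝ, Y.rank ≤ 1 →
        Real.sqrt (∑ i, ∑ j, (X i j - w i * h j) ^ 2) ≤
        Real.sqrt (∑ i, ∑ j, (X i j - Y i j) ^ 2) := by
  set S : ℝ := ∑ i, ∑ j, X i j ^ 2 with hS
  have hS0 : 0 ≤ S := Finset.sum_nonneg fun i _ =>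
    Finset.sum_nonneg fun j _ => sq_nonneg _
  set c : ℝ := 2 * Real.sqrt S with hc
  have hc0 : 0 ≤ c := by positivity
  set K : Set ((Fin m → ℝ) × (Fin n → ℝ)) :=
    Set.Icc (0 : Fin m → ℝ) (fun _ => c) ×ˢ Set.Icc (0 : Fin n → ℝ) (fun _ => 1) with hK
  have hKcomp : IsCompact K := isCompact_Icc.prod isCompact_Icc
  set F : (Fin m → ℝ) × (Fin n → ℝ) → ℝ :=
    fun p => ∑ i, ∑ j, (X i j - p.1 i * p.2 j) ^ 2 with hF
  have hFc : Continuous F := by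
    apply continuous_finset_sum
    intro i _
    apply continuous_finset_sum
    intro j _
    fun_prop
  have h0K : ((0 : Fin m → ℝ), (0 : Fin n → ℝ)) ∈ K := by
    constructor
    · exact ⟨le_refl _, fun i => hc0⟩
    · exact ⟨le_refl _, fun j => zero_le_one⟩
  obtain ⟨p₀, hp₀K, hmin⟩ := hKcomp.exists_isMinOn ⟨_, h0K⟩ hFc.continuousOn
  obtain ⟨⟨hw0, hwc⟩, ⟨hh0, hh1⟩⟩ := hp₀K
  refine ⟨p₀.1, p₀.2, fun i => hw0 i, fun j => hh0 j, fun Y hYr => ?_⟩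
  apply Real.sqrt_le_sqrt
  by_cases hcase : S ≤ ∑ i, ∑ j, (X i j - Y i j) ^ 2
  · refine le_trans (hmin h0K) ?_
    simpa [F, S] using hcase
  push_neg at hcase
  obtain ⟨u, v, huv⟩ := rank_le_one_exists_factor Y hYr
  -- bound on the Frobenius norm of Y
  set T : ℝ := ∑ i, ∑ j, Y i j ^ 2 with hT
  have hT0 : 0 ≤ T := Finset.sum_nonneg fun i _ =>
    Finset.sum_nonneg fun j _ => sq_nonneg _
  have hTS : T ≤ c ^ 2 := by
    have hexpand : ∑ i, ∑ j, (X i j - Y i j) ^ 2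
        = S - 2 * (∑ i, ∑ j, X i j * Y i j) + T := by
      simp only [hS, hT, Finset.mul_sum, ← Finset.sum_sub_distrib, ← Finset.sum_add_distrib]
      exact Finset.sum_congr rfl fun i _ => Finset.sum_congr rfl fun j _ => by ring
    have hCS : (∑ p : Fin m × Fin n, X p.1 p.2 * Y p.1 p.2) ^ 2
        ≤ (∑ p : Fin m × Fin n, X p.1 p.2 ^ 2) * ∑ p : Fin m × Fin n, Y p.1 p.2 ^ 2 :=
      Finset.sum_mul_sq_le_sq_mul_sq _ _ _
    rw [Fintype.sum_prod_type (f := fun p : Fin m × Fin n => X p.1 p.2 ^ 2),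
      Fintype.sum_prod_type (f := fun p : Fin m × Fin n => Y p.1 p.2 ^ 2),
      ← hS, ← hT] at hCS
    have hXY : ∑ i, ∑ j, X i j * Y i j
        = ∑ p : Fin m × Fin n, X p.1 p.2 * Y p.1 p.2 := by
      rw [Fintype.sum_prod_type]
    have hTlt : T < 2 * ∑ i, ∑ j, X i j * Y i j := by
      nlinarith [hcase, hexpand]
    -- (∑ XY) ≤ √S * √T
    have hsum_le : ∑ i, ∑ j, X i j * Y i j ≤ Real.sqrt S * Real.sqrt T := by
      rw [← Real.sqrt_mul hS0]
      calc ∑ i, ∑ j, X i j * Y i j ≤ |∑ i, ∑ j, X i j * Y i j| := le_abs_self _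
      _ = Real.sqrt ((∑ i, ∑ j, X i j * Y i j) ^ 2) := (Real.sqrt_sq_eq_abs _).symm
      _ ≤ Real.sqrt (S * T) := Real.sqrt_le_sqrt (by rw [hXY]; exact hCS)
    by_cases hTz : Real.sqrt T = 0
    · have : T = 0 := le_antisymm (Real.sqrt_eq_zero'.mp hTz) hT0
      rw [this]; positivity
    · have hTpos : 0 < Real.sqrt T := lt_of_le_of_ne (Real.sqrt_nonneg _) (Ne.symm hTz)
      have h1 : Real.sqrt T * Real.sqrt T < 2 * (Real.sqrt S * Real.sqrt T) := by
        rw [Real.mul_self_sqrt hT0]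
        calc T < 2 * ∑ i, ∑ j, X i j * Y i j := hTlt
        _ ≤ 2 * (Real.sqrt S * Real.sqrt T) := by linarith [hsum_le]
      have h2 : Real.sqrt T < 2 * Real.sqrt S := by
        have := lt_of_mul_lt_mul_right (by linarith [h1] : Real.sqrt T * Real.sqrt T < (2 * Real.sqrt S) * Real.sqrt T) hTpos.le
        exact this
      calc T = Real.sqrt T ^ 2 := (Real.sq_sqrt hT0).symm
      _ ≤ c ^ 2 := by
        apply pow_le_pow_left₀ (Real.sqrt_nonneg _) (le_of_lt h2)
  -- v ≠ 0, else contradiction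
  set s : ℝ := Real.sqrt (∑ j, v j ^ 2) with hs
  have hsv : ∀ j, |v j| ≤ s := by
    intro j
    rw [hs, ← Real.sqrt_sq_eq_abs]
    apply Real.sqrt_le_sqrt
    exact Finset.single_le_sum (f := fun j => v j ^ 2) (fun j _ => sq_nonneg _) (Finset.mem_univ j)
  by_cases hsz : s = 0
  · -- then v = 0, Y = 0, contradiction with hcase
    exfalso
    have hv0 : ∀ j, v j = 0 := fun j => abs_nonpos_iff.mp (hsz ▸ hsv j)
    have : ∑ i, ∑ j, (X i j - Y i j) ^ 2 = S := by
      apply Finset.sum_congr rfl; intro i _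
      apply Finset.sum_congr rfl; intro j _
      rw [huv i j, hv0 j]; ring
    linarith
  have hspos : 0 < s := lt_of_le_of_ne (Real.sqrt_nonneg _) (Ne.symm hsz)
  set w' : Fin m → ℝ := fun i => s * |u i| with hw'
  set h' : Fin n → ℝ := fun j => |v j| / s with hh'
  have hwh : ∀ i j, w' i * h' j = |Y i j| := by
    intro i j
    rw [huv i j, abs_mul, hw', hh']
    field_simp
  have hmem : (w', h') ∈ K := by
    constructor
    · refine ⟨fun i => by positivity, fun i => ?_⟩
      -- w' i ≤ c
      have hsq : (w' i) ^ 2 ≤ T := by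
        have : (w' i) ^ 2 = (∑ j, v j ^ 2) * u i ^ 2 := by
          rw [hw']
          rw [mul_pow, sq_abs, hs, Real.sq_sqrt (Finset.sum_nonneg fun j _ => sq_nonneg _)]
        rw [this, hT]
        calc (∑ j, v j ^ 2) * u i ^ 2 ≤ ∑ i', (∑ j, v j ^ 2) * u i' ^ 2 := by
              exact Finset.single_le_sum (f := fun i' => (∑ j, v j ^ 2) * u i' ^ 2)
                (fun i' _ => by positivity) (Finset.mem_univ i)
        _ = ∑ i', ∑ j, Y i' j ^ 2 := by
              apply Finset.sum_congr rfl; intro i' _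
              rw [Finset.sum_mul]
              apply Finset.sum_congr rfl; intro j _
              rw [huv i' j]; ring
      have : (w' i) ^ 2 ≤ c ^ 2 := le_trans hsq hTS
      have hwnn : 0 ≤ w' i := by positivity
      nlinarith
    · refine ⟨fun j => by positivity, fun j => ?_⟩
      rw [hh']
      rw [div_le_one hspos]
      exact hsv j
  calc F p₀ ≤ F (w', h') := hmin hmem
  _ = ∑ i, ∑ j, (X i j - |Y i j|) ^ 2 := by
      apply Finset.sum_congr rfl; intro i _
      apply Finset.sum_congr rfl; intro j _
      rw [hwh i j]
  _ ≤ ∑ i, ∑ j, (X i j - Y i j) ^ 2 := by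
      apply Finset.sum_le_sum; intro i _
      apply Finset.sum_le_sum; intro j _
      nlinarith [mul_le_mul_of_nonneg_left (le_abs_self (Y i j)) (hX i j),
        sq_abs (Y i j)]
end
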